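/- Let P = {t_1, ..., t_p} be a pot and suppose a graph G of order n is realized by P using R_j tiles of type t_j. Then the vector (R_1/n, ..., R_p/n) satisfies the construction matrix system: for each bond-edge type a_i, the sum over j of z_{i,j}·(R_j/n) = 0, and the sum of the entries R_j/n equals 1, where z_{i,j} is the net number of cohesive-ends of type a_i on tile t_j (unhatted counted +1, hatted counted −1). -/
import Mathlib


/-- A finite multigraph on vertex type `V` with edge type `E`; each edge `e` has two
half-edges `(e, true)` and `(e, false)`, and `side e s` is the endpoint of the
half-edge `(e, s)`.  Loops (both endpoints equal) and parallel edges are allowed. -/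
structure Multigraph (V E : Type) where
  side : E → Bool → V

/-- Cohesive-end symbols over a type `B` of bond-edge types: `(b, false)` is the
unhatted symbol `b` and `(b, true)` is the hatted symbol `b̂`. -/
abbrev CEnd (B : Type) : Type := B × Bool

/-- Complementation (hatting) of cohesive-end symbols. -/
def CEnd.hat {B : Type} (σ : CEnd B) : CEnd B := (σ.1, !σ.2)

/-- An assembly design on a multigraph: a labelling of half-edges by cohesive-end
symbols such that the two half-edges of each edge receive complementary symbols. -/
structure AssemblyDesign (B : Type) {V E : Type} (G : Multigraph V E) where
  label : E → Bool → CEnd B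
  compl : ∀ e : E, label e true = CEnd.hat (label e false)

/-- The labelled degree `d_σ(v)`: the number of half-edges incident to `v`
labelled with cohesive-end symbol `σ`. -/
noncomputable def labelledDeg {B V E : Type} {G : Multigraph V E}
    (lam : AssemblyDesign B G) (v : V) (σ : CEnd B) : ℕ :=
  {p : E × Bool | G.side p.1 p.2 = v ∧ lam.label p.1 p.2 = σ}.ncard

/-- The degree of a vertex: the number of incident half-edges. -/
noncomputable def Multigraph.deg {V E : Type} (G : Multigraph V E) (v : V) : ℕ :=
  {p : E × Bool | G.side p.1 p.2 = v}.ncard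

/-- A tile: a multiset of cohesive-end symbols, given by its multiplicity function. -/
abbrev Tile (B : Type) : Type := CEnd B → ℕ

/-- The net number `z` of cohesive ends of bond-edge type `b` on tile `t`
(unhatted counted `+1`, hatted counted `−1`). -/
def netCount {B : Type} (t : Tile B) (b : B) : ℤ := (t (b, false) : ℤ) - t (b, true)

open Classical in
lemma labelledDeg_eq_card {B V E : Type} [Fintype E] {G : Multigraph V E}
    (lam : AssemblyDesign B G) (v : V) (σ : CEnd B) :
    labelledDeg lam v σ =
      (Finset.univ.filter (fun q : E × Bool =>
        G.side q.1 q.2 = v ∧ lam.label q.1 q.2 = σ)).card := by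
  rw [labelledDeg, Set.ncard_eq_toFinset_card']
  congr 1
  ext q
  simp

open Classical in
lemma sum_labelledDeg {B V E : Type} [Fintype V] [Fintype E] {G : Multigraph V E}
    (lam : AssemblyDesign B G) (σ : CEnd B) :
    ∑ v : V, labelledDeg lam v σ =
      (Finset.univ.filter (fun q : E × Bool => lam.label q.1 q.2 = σ)).card := by
  rw [Finset.card_eq_sum_card_fiberwise
    (f := fun q : E × Bool => G.side q.1 q.2) (t := Finset.univ)
    (fun x _ => Finset.mem_univ _)]
  refine Finset.sum_congr rfl fun v _ => ?_
  rw [labelledDeg_eq_card, Finset.filter_filter]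
  congr 1
  ext q
  simp [and_comm]

open Classical in
lemma card_label_hat {B V E : Type} [Fintype E] {G : Multigraph V E}
    (lam : AssemblyDesign B G) (σ : CEnd B) :
    (Finset.univ.filter (fun q : E × Bool => lam.label q.1 q.2 = σ)).card =
      (Finset.univ.filter (fun q : E × Bool => lam.label q.1 q.2 = CEnd.hat σ)).card := by
  have key : ∀ (q : E × Bool) (τ : CEnd B), lam.label q.1 q.2 = τ →
      lam.label q.1 (!q.2) = CEnd.hat τ := by
    rintro ⟨e, s⟩ τ h
    cases s
    · show lam.label e true = CEnd.hat τ
      rw [lam.compl e, h]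
    · show lam.label e false = CEnd.hat τ
      have h2 := lam.compl e
      rw [h] at h2
      rw [h2]
      simp [CEnd.hat]
  refine Finset.card_bij' (fun q _ => (q.1, !q.2)) (fun q _ => (q.1, !q.2)) ?_ ?_ ?_ ?_
  · intro q hq
    simp only [Finset.mem_filter, Finset.mem_univ, true_and] at hq ⊢
    exact key q σ hq
  · intro q hq
    simp only [Finset.mem_filter, Finset.mem_univ, true_and] at hq ⊢
    have := key q (CEnd.hat σ) hq
    simpa [CEnd.hat] using this
  · intro q _; simp
  · intro q _; simp

open Classical in
lemma R_eq_card {V : Type} [Fintype V] {p : ℕ} (f : V → Fin p) (j : Fin p) :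
    {v : V | f v = j}.ncard = (Finset.univ.filter (fun v => f v = j)).card := by
  rw [Set.ncard_eq_toFinset_card']
  congr 1
  ext v
  simp

/-- If a graph `G` of order `n > 0` is realized by the pot
`P = {t_1, …, t_p}` using `R j` tiles of type `t j`, then `(R 1 / n, …, R p / n)`
satisfies the construction matrix system: `∑ j z i j * (R j / n) = 0` for every
bond-edge type, and `∑ j R j / n = 1`. -/
theorem stmt0 {B V E : Type} [Fintype V] [Fintype E]
    {p : ℕ} (P : Fin p → Tile B) (G : Multigraph V E)
    (lam : AssemblyDesign B G) (f : V → Fin p)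
    (hf : ∀ v : V, (fun σ => labelledDeg lam v σ) = P (f v))
    (R : Fin p → ℕ) (hR : ∀ j, R j = {v : V | f v = j}.ncard)
    (n : ℕ) (hn : n = Nat.card V) (hpos : 0 < n) :
    (∀ b : B, ∑ j : Fin p, (netCount (P j) b : ℚ) * ((R j : ℚ) / n) = 0) ∧
      ∑ j : Fin p, (R j : ℚ) / n = 1 := by
  classical
  have hsumR : ∑ j : Fin p, R j = Fintype.card V := by
    rw [Fintype.card, Finset.card_eq_sum_card_fiberwise
      (f := f) (t := Finset.univ) (fun x _ => Finset.mem_univ _)]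
    exact Finset.sum_congr rfl fun j _ => by rw [hR j, R_eq_card]
  have hnQ : (n : ℚ) ≠ 0 := by positivity
  constructor
  · intro b
    have key : ∑ j : Fin p, netCount (P j) b * (R j : ℤ) = 0 := by
      have h1 : ∀ j : Fin p, netCount (P j) b * (R j : ℤ) =
          ∑ v ∈ Finset.univ.filter (fun v => f v = j), netCount (P (f v)) b := by
        intro j
        rw [Finset.sum_congr rfl (fun v hv => by
          rw [(Finset.mem_filter.mp hv).2]), Finset.sum_const, nsmul_eq_mul,
          mul_comm, hR j, R_eq_card]
      rw [Finset.sum_congr rfl fun j _ => h1 j,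
        Finset.sum_fiberwise_of_maps_to (fun x _ => Finset.mem_univ _)]
      have h2 : ∀ v : V, netCount (P (f v)) b =
          (labelledDeg lam v (b, false) : ℤ) - labelledDeg lam v (b, true) := by
        intro v
        rw [netCount, ← hf v]
      rw [Finset.sum_congr rfl fun v _ => h2 v, Finset.sum_sub_distrib]
      rw [← Nat.cast_sum, ← Nat.cast_sum, sum_labelledDeg lam ((b, false) : CEnd B),
        sum_labelledDeg lam ((b, true) : CEnd B), card_label_hat lam ((b, false) : CEnd B)]
      have hh : (CEnd.hat ((b, false) : CEnd B)) = ((b, true) : CEnd B) := rfl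
      rw [hh, sub_self]
    have keyQ : ∑ j : Fin p, (netCount (P j) b : ℚ) * (R j : ℚ) = 0 := by
      exact_mod_cast congrArg (Int.cast : ℤ → ℚ) key
    calc ∑ j : Fin p, (netCount (P j) b : ℚ) * ((R j : ℚ) / n)
        = (∑ j : Fin p, (netCount (P j) b : ℚ) * (R j : ℚ)) / n := by
          rw [Finset.sum_div]; exact Finset.sum_congr rfl fun j _ => by ring
      _ = 0 := by rw [keyQ, zero_div]
  · rw [← Finset.sum_div]
    have : (∑ j : Fin p, (R j : ℚ)) = n := by
      rw [hn, Nat.card_eq_fintype_card]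
      exact_mod_cast congrArg (Nat.cast : ℕ → ℚ) hsumR
    rw [this, div_self hnQ]
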